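/- For every integer m ≥ 0 and every r > 0, there exists a constant C > 0 such that for all integers n ≥ 1, ‖F[Re v_{n,m}]‖_{L∞([-r,r]²)} ≤ C e^{−n}, where F denotes the two-dimensional Fourier transform. -/

import Mathlib

open MeasureTheory Real Complex Finset

noncomputable section

/-- The closed box `[-r, r]^d` in `ℝ^d`. -/
def box (d : ℕ) (r : ℝ) : Set (Fin d → ℝ) := {ξ | ∀ j, |ξ j| ≤ r}

/-- The Fourier transform `F v (ξ) = (2π)^{-d} ∫ e^{i ξ·x} v(x) dx`. -/
def FT (d : ℕ) (v : (Fin d → ℝ) → ℂ) (ξ : Fin d → ℝ) : ℂ :=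
  (((2 * Real.pi) ^ d : ℝ) : ℂ)⁻¹ *
    ∫ x : Fin d → ℝ, Complex.exp (Complex.I * ((∑ j, ξ j * x j : ℝ) : ℂ)) * v x

/-- Chebyshev polynomial of the first kind, evaluated at a real number. -/
def cheb (k : ℕ) (t : ℝ) : ℝ := (Polynomial.Chebyshev.T ℝ (k : ℤ)).eval t

/-- The Chebyshev coefficients `a_{k₁,…,k_d}[w]` of a function `w` on `[-r,r]^d`. -/
def acoef (d : ℕ) (r : ℝ) (w : (Fin d → ℝ) → ℂ) (k : Fin d → ℕ) : ℂ :=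
  ∫ ξ in box d r, w ξ *
    (((∏ j, (2 : ℝ) ^ (if 0 < k j then 1 else 0) * cheb (k j) (ξ j / r) /
        (Real.pi * Real.sqrt (r ^ 2 - ξ j ^ 2))) : ℝ) : ℂ)

open scoped Classical in
/-- The extrapolation `C_{R,n}[w]` based on truncated Chebyshev series. -/
def chebExt (d : ℕ) (r R : ℝ) (n : ℕ) (w : (Fin d → ℝ) → ℂ) (ξ : Fin d → ℝ) : ℂ :=
  if ξ ∈ box d r then w ξ
  else if ξ ∈ box d R then
    ∑ k ∈ (Fintype.piFinset fun _ : Fin d => Finset.range n).filter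
        (fun k => ∑ j, k j < n),
      acoef d r w k * (((∏ j, cheb (k j) (ξ j / r)) : ℝ) : ℂ)
  else 0

/-- The bump function `g` from the paper (formula (31)). -/
def gfun (t : ℝ) : ℝ :=
  if 1 < t ∧ t < 2 then Real.exp (1 / ((t - 1) * (t - 2))) else 0

/-- The function `v_{n,m}(t cos φ, t sin φ) = n^{-m} e^{i n φ} g(t)` from the paper. -/
def vnm (n m : ℕ) (x : Fin 2 → ℝ) : ℂ :=
  ((n : ℂ) ^ m)⁻¹ *
    ((((x 0 : ℂ) + (x 1 : ℂ) * Complex.I) /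
        ((‖(x 0 : ℂ) + (x 1 : ℂ) * Complex.I‖ : ℝ) : ℂ)) ^ n) *
    ((gfun ‖(x 0 : ℂ) + (x 1 : ℂ) * Complex.I‖ : ℝ) : ℂ)


section aux
open Finset Nat

lemma term_norm (R : ℝ) (z : ℝ) (hz : |z| ≤ R) (k : ℕ) :
    ‖(Complex.I * (z:ℂ)) ^ k / (k ! : ℂ)‖ ≤ R ^ k / (k ! : ℝ) := by
  rw [norm_div, norm_pow, norm_mul, Complex.norm_I, one_mul, Complex.norm_real,
    Complex.norm_natCast]
  gcongr <;> first | positivity | exact hz | exact abs_nonneg z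

lemma tail_bound (R : ℝ) (hR : 0 ≤ R) (n : ℕ) (z : ℝ) (hz : |z| ≤ R) :
    ‖Complex.exp (Complex.I * z) - ∑ k ∈ range n, (Complex.I * z) ^ k / (k ! : ℂ)‖ ≤
      R ^ n / (n ! : ℝ) * Real.exp R := by
  have hsum : Summable (fun k : ℕ => (Complex.I * (z:ℂ)) ^ k / (k ! : ℂ)) :=
    Summable.of_norm_bounded (Real.summable_pow_div_factorial R) (term_norm R z hz)
  have hexp : Complex.exp (Complex.I * z) = ∑' k : ℕ, (Complex.I * z) ^ k / (k ! : ℂ) := by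
    rw [Complex.exp_eq_exp_ℂ, NormedSpace.exp_eq_tsum_div]
  rw [hexp, ← Summable.sum_add_tsum_nat_add n hsum, add_sub_cancel_left]
  have hRsum := Real.summable_pow_div_factorial R
  have hRsum' : Summable (fun k : ℕ => R ^ (k + n) / (((k + n)! : ℕ) : ℝ)) :=
    (summable_nat_add_iff n).2 hRsum
  have h2 : ∀ k : ℕ, R ^ (k + n) / (((k + n)! : ℕ) : ℝ)
      ≤ R ^ n / (n ! : ℝ) * (R ^ k / (k ! : ℝ)) := by
    intro k
    have hfac : ((n ! : ℕ) : ℝ) * ((k ! : ℕ) : ℝ) ≤ (((k + n)! : ℕ) : ℝ) := by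
      have h : n ! * k ! ≤ (k + n)! := by
        rw [Nat.add_comm k n]
        exact Nat.le_of_dvd (Nat.factorial_pos _)
          (Nat.factorial_mul_factorial_dvd_factorial_add n k)
      exact_mod_cast h
    calc R ^ (k + n) / (((k + n)! : ℕ) : ℝ)
        ≤ R ^ (k + n) / (((n ! : ℕ) : ℝ) * ((k ! : ℕ) : ℝ)) := by
          gcongr
      _ = R ^ n / (n ! : ℝ) * (R ^ k / (k ! : ℝ)) := by
          rw [Nat.add_comm, pow_add]; field_simp
  calc ‖∑' k : ℕ, (Complex.I * (z:ℂ)) ^ (k + n) / (((k + n)! : ℕ) : ℂ)‖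
      ≤ ∑' k : ℕ, R ^ (k + n) / (((k + n)!:ℕ) : ℝ) := by
        refine le_trans (norm_tsum_le_tsum_norm ?_)
          (Summable.tsum_le_tsum (fun k => term_norm R z hz (k + n)) ?_ hRsum')
        · exact hRsum'.of_nonneg_of_le (fun k => norm_nonneg _)
            (fun k => term_norm R z hz (k + n))
        · exact hRsum'.of_nonneg_of_le (fun k => norm_nonneg _)
            (fun k => term_norm R z hz (k + n))
    _ ≤ ∑' k : ℕ, R ^ n / (n ! : ℝ) * (R ^ k / (k ! : ℝ)) :=
        Summable.tsum_le_tsum h2 hRsum' (hRsum.mul_left _)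
    _ = R ^ n / (n ! : ℝ) * Real.exp R := by
        rw [tsum_mul_left, Real.exp_eq_exp_ℝ, NormedSpace.exp_eq_tsum_div]

lemma vnm_polar_re (n m : ℕ) (t θ : ℝ) (ht : 0 < t) :
    (vnm n m ![t * Real.cos θ, t * Real.sin θ]).re
      = ((n:ℝ)^m)⁻¹ * gfun t * Real.cos (n * θ) := by
  have hz : ((t * Real.cos θ : ℝ) : ℂ) + ((t * Real.sin θ : ℝ) : ℂ) * Complex.I
      = (t : ℂ) * Complex.exp (θ * Complex.I) := by
    rw [Complex.exp_mul_I]; push_cast; ring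
  have habs : ‖(t : ℂ) * Complex.exp (θ * Complex.I)‖ = t := by
    rw [norm_mul, Complex.norm_real, Real.norm_eq_abs, abs_of_pos ht, Complex.norm_exp_ofReal_mul_I, mul_one]
  have ht' : (t : ℂ) ≠ 0 := by exact_mod_cast ht.ne'
  have hv : vnm n m ![t * Real.cos θ, t * Real.sin θ]
      = ((((n:ℝ)^m)⁻¹ * gfun t : ℝ) : ℂ) * Complex.exp (((n * θ : ℝ) : ℂ) * Complex.I) := by
    simp only [vnm, Matrix.cons_val_zero, Matrix.cons_val_one, Matrix.head_cons, hz, habs]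
    rw [mul_div_cancel_left₀ _ ht', ← Complex.exp_nat_mul]
    push_cast
    ring_nf
  rw [hv, Complex.re_ofReal_mul, Complex.exp_ofReal_mul_I_re]

lemma int_exp (M : ℤ) (hM : M ≠ 0) :
    ∫ θ in (-π)..π, Complex.exp ((M : ℂ) * Complex.I * θ) = 0 := by
  have hc : (M : ℂ) * Complex.I ≠ 0 := by
    simp [Complex.I_ne_zero, hM]
  rw [integral_exp_mul_complex hc]
  have : Complex.exp ((M:ℂ) * Complex.I * (π:ℝ)) = Complex.exp ((M:ℂ) * Complex.I * ((-π:ℝ):ℝ)) := by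
    rw [show ((M:ℂ) * Complex.I * (π:ℝ)) = (M:ℂ) * Complex.I * ((-π:ℝ):ℝ) + M * (2 * π * Complex.I) by
      push_cast; ring]
    rw [Complex.exp_add, Complex.exp_int_mul_two_pi_mul_I, mul_one]
  rw [this, sub_self, zero_div]

lemma angular (ξ0 ξ1 : ℝ) (k : ℕ) (N : ℤ) (hN : ∀ j : ℕ, j ≤ k → (N + 2*(j:ℤ) - k) ≠ 0) :
    ∫ θ in Set.Ioo (-π) π,
      ((ξ0 * Real.cos θ + ξ1 * Real.sin θ : ℝ) : ℂ) ^ k * Complex.exp ((N:ℂ) * θ * Complex.I)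
      = 0 := by
  set a : ℂ := (ξ0 - ξ1 * Complex.I) / 2 with ha
  set b : ℂ := (ξ0 + ξ1 * Complex.I) / 2 with hb
  have hpi : (-π : ℝ) ≤ π := by linarith [Real.pi_pos]
  rw [← MeasureTheory.integral_Ioc_eq_integral_Ioo, ← intervalIntegral.integral_of_le hpi]
  have key : ∀ θ : ℝ,
      ((ξ0 * Real.cos θ + ξ1 * Real.sin θ : ℝ) : ℂ) ^ k * Complex.exp ((N:ℂ) * θ * Complex.I)
      = ∑ j ∈ range (k + 1), ((k.choose j : ℂ) * (a ^ j * b ^ (k - j))) *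
          Complex.exp (((N + 2*(j:ℤ) - k : ℤ) : ℂ) * Complex.I * θ) := by
    intro θ
    have hc : ((ξ0 * Real.cos θ + ξ1 * Real.sin θ : ℝ) : ℂ)
        = a * Complex.exp (θ * Complex.I) + b * Complex.exp (-(θ * Complex.I)) := by
      rw [Complex.exp_mul_I, show -(↑θ * Complex.I) = ((-θ : ℝ) : ℂ) * Complex.I by push_cast; ring,
        Complex.exp_mul_I, Complex.ofReal_neg, Complex.cos_neg, Complex.sin_neg]
      rw [ha, hb]
      push_cast
      linear_combination (↑ξ1 * Complex.sin ↑θ) * Complex.I_sq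
    rw [hc, add_pow, Finset.sum_mul]
    apply Finset.sum_congr rfl
    intro j hj
    have hjk : j ≤ k := Nat.lt_succ_iff.mp (mem_range.mp hj)
    have he : Complex.exp ((j : ℕ) * (↑θ * Complex.I)) *
        Complex.exp (((k - j : ℕ) : ℂ) * -(↑θ * Complex.I)) *
        Complex.exp ((N:ℂ) * ↑θ * Complex.I)
        = Complex.exp (((N + 2*(j:ℤ) - k : ℤ) : ℂ) * Complex.I * ↑θ) := by
      rw [← Complex.exp_add, ← Complex.exp_add]
      congr 1
      have hcast : ((k - j : ℕ) : ℂ) = (k : ℂ) - (j : ℂ) := by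
        push_cast [hjk]; ring
      rw [hcast]
      push_cast
      ring
    rw [mul_pow, mul_pow, ← Complex.exp_nat_mul, ← Complex.exp_nat_mul, ← he]
    ring
  rw [intervalIntegral.integral_congr (fun θ _ => key θ)]
  rw [intervalIntegral.integral_finset_sum]
  · apply Finset.sum_eq_zero
    intro j hj
    rw [intervalIntegral.integral_const_mul,
      int_exp _ (hN j (Nat.lt_succ_iff.mp (mem_range.mp hj))), mul_zero]
  · intro j hj
    apply Continuous.intervalIntegrable
    fun_prop

lemma moment (n m k : ℕ) (hk : k < n) (ξ : Fin 2 → ℝ) :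
    (∫ x : Fin 2 → ℝ, ((ξ 0 * x 0 + ξ 1 * x 1 : ℝ) : ℂ) ^ k * (((vnm n m x).re : ℝ) : ℂ)) = 0 := by
  set G : (Fin 2 → ℝ) → ℂ :=
    fun x => ((ξ 0 * x 0 + ξ 1 * x 1 : ℝ) : ℂ) ^ k * (((vnm n m x).re : ℝ) : ℂ) with hG
  have h1 : (∫ x : Fin 2 → ℝ, G x) = ∫ p : ℝ × ℝ, G ![p.1, p.2] :=
    (((volume_preserving_finTwoArrow ℝ).symm _).integral_comp
      (MeasurableEquiv.measurableEmbedding _) G).symm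
  rw [h1, ← integral_comp_polarCoord_symm (fun p => G ![p.1, p.2])]
  set A : ℝ → ℂ := fun t => ((t * t^k * ((n:ℝ)^m)⁻¹ * gfun t : ℝ) : ℂ) with hA
  set B : ℝ → ℂ := fun θ =>
    ((ξ 0 * Real.cos θ + ξ 1 * Real.sin θ : ℝ) : ℂ) ^ k * ((Real.cos (n * θ) : ℝ) : ℂ) with hB
  have h2 : ∀ p ∈ polarCoord.target,
      p.1 • G ![(polarCoord.symm p).1, (polarCoord.symm p).2] = A p.1 * B p.2 := by
    rintro ⟨t, θ⟩ ⟨ht, hθ⟩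
    have ht : (0:ℝ) < t := ht
    show t • G ![t * Real.cos θ, t * Real.sin θ] = A t * B θ
    rw [hG]
    simp only [Matrix.cons_val_zero, Matrix.cons_val_one, Matrix.head_cons]
    rw [vnm_polar_re n m t θ ht, hA, hB]
    rw [show (ξ 0 * (t * Real.cos θ) + ξ 1 * (t * Real.sin θ) : ℝ)
        = t * (ξ 0 * Real.cos θ + ξ 1 * Real.sin θ) from by ring]
    rw [Complex.real_smul, Complex.ofReal_mul, mul_pow]
    push_cast
    ring
  rw [setIntegral_congr_fun (polarCoord.open_target.measurableSet) h2]
  have htarget : polarCoord.target = Set.Ioi (0:ℝ) ×ˢ Set.Ioo (-π) π := rfl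
  rw [htarget, MeasureTheory.Measure.volume_eq_prod, setIntegral_prod_mul]
  have hBzero : (∫ θ in Set.Ioo (-π) π, B θ) = 0 := by
    have hcos : ∀ θ : ℝ, ((Real.cos (n * θ) : ℝ) : ℂ)
        = (Complex.exp (((n:ℤ) : ℂ) * θ * Complex.I)
            + Complex.exp ((((-(n:ℤ)) : ℤ) : ℂ) * θ * Complex.I)) / 2 := by
      intro θ
      rw [Complex.ofReal_cos, Complex.cos]
      push_cast
      ring_nf
    have hint : ∀ N : ℤ, IntegrableOn (fun θ : ℝ =>
        ((ξ 0 * Real.cos θ + ξ 1 * Real.sin θ : ℝ) : ℂ) ^ k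
          * Complex.exp ((N:ℂ) * θ * Complex.I)) (Set.Ioo (-π) π) := by
      intro N
      exact ((Continuous.integrableOn_Icc (by fun_prop)).mono_set Set.Ioo_subset_Icc_self)
    calc (∫ θ in Set.Ioo (-π) π, B θ)
        = ∫ θ in Set.Ioo (-π) π,
            (((ξ 0 * Real.cos θ + ξ 1 * Real.sin θ : ℝ):ℂ)^k
               * Complex.exp ((((n:ℤ)):ℂ) * θ * Complex.I)
             + ((ξ 0 * Real.cos θ + ξ 1 * Real.sin θ : ℝ):ℂ)^k
               * Complex.exp (((-(n:ℤ) : ℤ):ℂ) * θ * Complex.I)) / 2 := by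
          refine integral_congr_ae (Filter.Eventually.of_forall fun θ => ?_)
          simp only [hB, hcos]
          ring
      _ = ((∫ θ in Set.Ioo (-π) π, ((ξ 0 * Real.cos θ + ξ 1 * Real.sin θ : ℝ):ℂ)^k
               * Complex.exp ((((n:ℤ)):ℂ) * θ * Complex.I))
           + ∫ θ in Set.Ioo (-π) π, ((ξ 0 * Real.cos θ + ξ 1 * Real.sin θ : ℝ):ℂ)^k
               * Complex.exp (((-(n:ℤ) : ℤ):ℂ) * θ * Complex.I)) / 2 := by
          rw [integral_div, integral_add (hint n) (hint (-n))]
      _ = 0 := by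
          rw [angular _ _ _ _ (fun j hj => by omega), angular _ _ _ _ (fun j hj => by omega)]
          norm_num
  rw [hBzero, mul_zero]

lemma measurable_gfun : Measurable gfun := by
  unfold gfun
  apply Measurable.ite
  · exact (measurableSet_lt measurable_const measurable_id).inter
      (measurableSet_lt measurable_id measurable_const)
  · fun_prop
  · fun_prop

lemma measurable_vnm (n m : ℕ) : Measurable (vnm n m) := by
  unfold vnm
  have h1 : Measurable fun x : Fin 2 → ℝ => ((x 0 : ℂ) + (x 1 : ℂ) * Complex.I) := by fun_prop
  have h2 : Measurable fun x : Fin 2 → ℝ =>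
      ‖(x 0 : ℂ) + (x 1 : ℂ) * Complex.I‖ := by
    exact h1.norm
  apply Measurable.mul
  apply Measurable.mul
  · fun_prop
  · exact (h1.div (Complex.measurable_ofReal.comp h2)).pow_const n
  · exact Complex.measurable_ofReal.comp (measurable_gfun.comp h2)

lemma gfun_nonneg (t : ℝ) : 0 ≤ gfun t := by
  unfold gfun; split_ifs
  · positivity
  · exact le_refl 0

lemma gfun_le_one (t : ℝ) : gfun t ≤ 1 := by
  unfold gfun; split_ifs with h
  · rw [Real.exp_le_one_iff]
    apply div_nonpos_of_nonneg_of_nonpos zero_le_one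
    nlinarith [h.1, h.2]
  · norm_num

lemma norm_vnm_le (n m : ℕ) (hn : 1 ≤ n) (x : Fin 2 → ℝ) : ‖vnm n m x‖ ≤ 1 := by
  unfold vnm
  rw [norm_mul, norm_mul]
  have hg : ‖((gfun ‖(x 0 : ℂ) + (x 1 : ℂ) * Complex.I‖ : ℝ) : ℂ)‖ ≤ 1 := by
    rw [Complex.norm_real, Real.norm_eq_abs, _root_.abs_of_nonneg (gfun_nonneg _)]
    exact gfun_le_one _
  have hinv : ‖((n : ℂ) ^ m)⁻¹‖ ≤ 1 := by
    rw [norm_inv, norm_pow, Complex.norm_natCast]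
    apply inv_le_one_of_one_le₀
    exact one_le_pow₀ (by exact_mod_cast hn)
  have hq : ‖(((x 0 : ℂ) + (x 1 : ℂ) * Complex.I) /
      ((‖(x 0 : ℂ) + (x 1 : ℂ) * Complex.I‖ : ℝ) : ℂ)) ^ n‖ ≤ 1 := by
    rw [norm_pow]
    apply pow_le_one₀ (norm_nonneg _)
    rw [norm_div, Complex.norm_real, Real.norm_eq_abs, _root_.abs_of_nonneg (norm_nonneg _)]
    rcases eq_or_ne ((x 0 : ℂ) + (x 1 : ℂ) * Complex.I) 0 with h | h
    · simp [h]
    · rw [div_le_one (norm_pos_iff.mpr h)]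
  calc ‖((n : ℂ) ^ m)⁻¹‖ * ‖_ ^ n‖ * ‖_‖ ≤ 1 * 1 * 1 := by gcongr
    _ = 1 := by norm_num

lemma vnm_eq_zero (n m : ℕ) (x : Fin 2 → ℝ)
    (hx : x ∉ Metric.closedBall (0 : Fin 2 → ℝ) 2) : vnm n m x = 0 := by
  have hex : ∃ j, 2 < |x j| := by
    by_contra h
    push_neg at h
    apply hx
    rw [mem_closedBall_zero_iff]
    exact (pi_norm_le_iff_of_nonneg (by norm_num)).2 fun j => by
      simpa [Real.norm_eq_abs] using h j
  obtain ⟨j, hj⟩ := hex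
  have habs : 2 < ‖(x 0 : ℂ) + (x 1 : ℂ) * Complex.I‖ := by
    have hre : ((x 0 : ℂ) + (x 1 : ℂ) * Complex.I).re = x 0 := by simp
    have him : ((x 0 : ℂ) + (x 1 : ℂ) * Complex.I).im = x 1 := by simp
    fin_cases j
    · refine hj.trans_le ?_
      have h := Complex.abs_re_le_norm ((x 0 : ℂ) + (x 1 : ℂ) * Complex.I)
      rwa [hre] at h
    · refine hj.trans_le ?_
      have h := Complex.abs_im_le_norm ((x 0 : ℂ) + (x 1 : ℂ) * Complex.I)
      rwa [him] at h
  unfold vnm gfun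
  rw [if_neg (fun hcon => absurd hcon.2 (not_lt.2 habs.le))]
  simp

lemma integrable_mul_w (n m : ℕ) (hn : 1 ≤ n) (f : (Fin 2 → ℝ) → ℂ) (hf : Continuous f) :
    Integrable (fun x => f x * (((vnm n m x).re : ℝ) : ℂ)) := by
  obtain ⟨M, hM⟩ := (isCompact_closedBall (0 : Fin 2 → ℝ) 2).exists_bound_of_continuousOn
    hf.continuousOn
  have hwnorm : ∀ x, ‖(((vnm n m x).re : ℝ) : ℂ)‖ ≤ 1 := fun x => by
    rw [Complex.norm_real, Real.norm_eq_abs]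
    exact (Complex.abs_re_le_norm _).trans (norm_vnm_le n m hn x)
  refine Integrable.mono'
    (g := fun x => (Metric.closedBall (0 : Fin 2 → ℝ) 2).indicator (fun _ => max M 0) x)
    ?_ ?_ ?_
  · rw [integrable_indicator_iff measurableSet_closedBall]
    exact integrableOn_const measure_closedBall_lt_top.ne
  · exact (hf.measurable.mul
      (Complex.measurable_ofReal.comp
        (Complex.measurable_re.comp (measurable_vnm n m)))).aestronglyMeasurable
  · refine Filter.Eventually.of_forall fun x => ?_
    by_cases hx : x ∈ Metric.closedBall (0 : Fin 2 → ℝ) 2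
    · simp only [Set.indicator_of_mem hx]
      rw [norm_mul]
      calc ‖f x‖ * ‖(((vnm n m x).re : ℝ) : ℂ)‖ ≤ max M 0 * 1 :=
            mul_le_mul ((hM x hx).trans (le_max_left _ _)) (hwnorm x) (norm_nonneg _)
              (le_max_right _ _)
        _ = max M 0 := mul_one _
    · simp only [Set.indicator_of_notMem hx, vnm_eq_zero n m x hx]
      simp


end aux

/-- Lemma 5.1 of the paper. -/
theorem stmt7 (m : ℕ) (r : ℝ) (hr : 0 < r) :
    ∃ C > 0, ∀ n : ℕ, 1 ≤ n → ∀ ξ ∈ box 2 r,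
      ‖FT 2 (fun x => (((vnm n m x).re : ℝ) : ℂ)) ξ‖ ≤ C * Real.exp (-(n : ℝ)) := by
  have hpi := Real.pi_pos
  set R : ℝ := 4 * r with hR
  have hR0 : (0:ℝ) ≤ R := by positivity
  set V : ℝ := (volume (Metric.closedBall (0 : Fin 2 → ℝ) 2)).toReal with hV
  have hV0 : 0 ≤ V := ENNReal.toReal_nonneg
  refine ⟨((2 * Real.pi) ^ 2)⁻¹ * V * (Real.exp R * Real.exp (Real.exp 1 * R)) + 1,
    by positivity, ?_⟩
  intro n hn ξ hξ
  have hξ0 : |ξ 0| ≤ r := hξ 0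
  have hξ1 : |ξ 1| ≤ r := hξ 1
  have hwnorm : ∀ x : Fin 2 → ℝ, ‖(((vnm n m x).re : ℝ) : ℂ)‖ ≤ 1 := fun x => by
    rw [Complex.norm_real, Real.norm_eq_abs]
    exact (Complex.abs_re_le_norm _).trans (norm_vnm_le n m hn x)
  have hFT : FT 2 (fun x => (((vnm n m x).re : ℝ) : ℂ)) ξ
      = (((2 * Real.pi) ^ 2 : ℝ) : ℂ)⁻¹ * ∫ x : Fin 2 → ℝ,
          Complex.exp (Complex.I * ((ξ 0 * x 0 + ξ 1 * x 1 : ℝ) : ℂ))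
            * (((vnm n m x).re : ℝ) : ℂ) := by
    rw [FT]
    simp only [Fin.sum_univ_two]
  have hP : (∫ x : Fin 2 → ℝ,
      (∑ k ∈ Finset.range n, (Complex.I * ((ξ 0 * x 0 + ξ 1 * x 1 : ℝ) : ℂ)) ^ k
        / (Nat.factorial k : ℂ)) * (((vnm n m x).re : ℝ) : ℂ)) = 0 := by
    have hptw : ∀ x : Fin 2 → ℝ,
        (∑ k ∈ Finset.range n, (Complex.I * ((ξ 0 * x 0 + ξ 1 * x 1 : ℝ) : ℂ)) ^ k
          / (Nat.factorial k : ℂ)) * (((vnm n m x).re : ℝ) : ℂ)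
        = ∑ k ∈ Finset.range n, (Complex.I ^ k / (Nat.factorial k : ℂ)) *
            (((ξ 0 * x 0 + ξ 1 * x 1 : ℝ) : ℂ) ^ k * (((vnm n m x).re : ℝ) : ℂ)) := by
      intro x
      rw [Finset.sum_mul]
      refine Finset.sum_congr rfl fun k _ => ?_
      rw [mul_pow]
      ring
    simp_rw [hptw]
    rw [integral_finset_sum _ (fun k _ =>
      (integrable_mul_w n m hn _ (by fun_prop)).const_mul _)]
    refine Finset.sum_eq_zero fun k hk => ?_
    rw [integral_const_mul, moment n m k (Finset.mem_range.mp hk) ξ, mul_zero]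
  have hsub : (∫ x : Fin 2 → ℝ,
        Complex.exp (Complex.I * ((ξ 0 * x 0 + ξ 1 * x 1 : ℝ) : ℂ))
          * (((vnm n m x).re : ℝ) : ℂ))
      = ∫ x : Fin 2 → ℝ,
          (Complex.exp (Complex.I * ((ξ 0 * x 0 + ξ 1 * x 1 : ℝ) : ℂ))
            - ∑ k ∈ Finset.range n, (Complex.I * ((ξ 0 * x 0 + ξ 1 * x 1 : ℝ) : ℂ)) ^ k
                / (Nat.factorial k : ℂ)) * (((vnm n m x).re : ℝ) : ℂ) := by
    have h1 : Integrable (fun x : Fin 2 → ℝ =>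
        Complex.exp (Complex.I * ((ξ 0 * x 0 + ξ 1 * x 1 : ℝ) : ℂ))
          * (((vnm n m x).re : ℝ) : ℂ)) := integrable_mul_w n m hn _ (by fun_prop)
    have h2 : Integrable (fun x : Fin 2 → ℝ =>
        (∑ k ∈ Finset.range n, (Complex.I * ((ξ 0 * x 0 + ξ 1 * x 1 : ℝ) : ℂ)) ^ k
          / (Nat.factorial k : ℂ)) * (((vnm n m x).re : ℝ) : ℂ)) := by
      refine integrable_mul_w n m hn _ ?_
      refine continuous_finset_sum _ fun k _ => ?_
      fun_prop
    rw [show (fun x : Fin 2 → ℝ =>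
        (Complex.exp (Complex.I * ((ξ 0 * x 0 + ξ 1 * x 1 : ℝ) : ℂ))
          - ∑ k ∈ Finset.range n, (Complex.I * ((ξ 0 * x 0 + ξ 1 * x 1 : ℝ) : ℂ)) ^ k
              / (Nat.factorial k : ℂ)) * (((vnm n m x).re : ℝ) : ℂ))
      = fun x : Fin 2 → ℝ =>
          Complex.exp (Complex.I * ((ξ 0 * x 0 + ξ 1 * x 1 : ℝ) : ℂ))
            * (((vnm n m x).re : ℝ) : ℂ)
          - (∑ k ∈ Finset.range n, (Complex.I * ((ξ 0 * x 0 + ξ 1 * x 1 : ℝ) : ℂ)) ^ k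
              / (Nat.factorial k : ℂ)) * (((vnm n m x).re : ℝ) : ℂ)
      from funext fun x => by ring]
    rw [integral_sub h1 h2, hP, sub_zero]
  set D : ℝ := R ^ n / (Nat.factorial n : ℝ) * Real.exp R with hD
  have hD0 : 0 ≤ D := by positivity
  have hmain : ‖∫ x : Fin 2 → ℝ,
      (Complex.exp (Complex.I * ((ξ 0 * x 0 + ξ 1 * x 1 : ℝ) : ℂ))
        - ∑ k ∈ Finset.range n, (Complex.I * ((ξ 0 * x 0 + ξ 1 * x 1 : ℝ) : ℂ)) ^ k
            / (Nat.factorial k : ℂ)) * (((vnm n m x).re : ℝ) : ℂ)‖ ≤ D * V := by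
    have hg : Integrable
        ((Metric.closedBall (0 : Fin 2 → ℝ) 2).indicator (fun _ => D)) := by
      rw [integrable_indicator_iff measurableSet_closedBall]
      exact integrableOn_const measure_closedBall_lt_top.ne
    refine (norm_integral_le_of_norm_le hg
      (Filter.Eventually.of_forall fun x => ?_)).trans ?_
    · by_cases hx : x ∈ Metric.closedBall (0 : Fin 2 → ℝ) 2
      · rw [Set.indicator_of_mem hx]
        have hx2 : ∀ j, |x j| ≤ 2 := by
          intro j
          have h1 : ‖x j‖ ≤ ‖x‖ := norm_le_pi_norm x j
          have h2 : ‖x‖ ≤ 2 := mem_closedBall_zero_iff.mp hx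
          rw [Real.norm_eq_abs] at h1
          linarith
        have hSx : |ξ 0 * x 0 + ξ 1 * x 1| ≤ R := by
          calc |ξ 0 * x 0 + ξ 1 * x 1| ≤ |ξ 0 * x 0| + |ξ 1 * x 1| := abs_add_le _ _
            _ = |ξ 0| * |x 0| + |ξ 1| * |x 1| := by rw [abs_mul, abs_mul]
            _ ≤ r * 2 + r * 2 := by
                gcongr <;> first | exact hξ0 | exact hξ1 | exact hx2 0 | exact hx2 1 | positivity
            _ = R := by rw [hR]; ring
        calc ‖(Complex.exp (Complex.I * ((ξ 0 * x 0 + ξ 1 * x 1 : ℝ) : ℂ))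
              - ∑ k ∈ Finset.range n, (Complex.I * ((ξ 0 * x 0 + ξ 1 * x 1 : ℝ) : ℂ)) ^ k
                  / (Nat.factorial k : ℂ)) * (((vnm n m x).re : ℝ) : ℂ)‖
            = ‖Complex.exp (Complex.I * ((ξ 0 * x 0 + ξ 1 * x 1 : ℝ) : ℂ))
              - ∑ k ∈ Finset.range n, (Complex.I * ((ξ 0 * x 0 + ξ 1 * x 1 : ℝ) : ℂ)) ^ k
                  / (Nat.factorial k : ℂ)‖ * ‖(((vnm n m x).re : ℝ) : ℂ)‖ := norm_mul _ _
          _ ≤ D * 1 :=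
              mul_le_mul (tail_bound R hR0 n _ hSx) (hwnorm x) (norm_nonneg _) hD0
          _ = D := mul_one _
      · rw [Set.indicator_of_notMem hx, vnm_eq_zero n m x hx]
        simp
    · rw [integral_indicator_const _ measurableSet_closedBall, smul_eq_mul, mul_comm]
      rfl
  have hfact : R ^ n / (Nat.factorial n : ℝ)
      ≤ Real.exp (Real.exp 1 * R) * Real.exp (-(n : ℝ)) := by
    have h1 : (Real.exp 1 * R) ^ n / (Nat.factorial n : ℝ)
        ≤ Real.exp (Real.exp 1 * R) := by
      calc (Real.exp 1 * R) ^ n / (Nat.factorial n : ℝ)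
          ≤ ∑ i ∈ Finset.range (n + 1), (Real.exp 1 * R) ^ i / (Nat.factorial i : ℝ) :=
            Finset.single_le_sum
              (f := fun i => (Real.exp 1 * R) ^ i / (Nat.factorial i : ℝ))
              (fun i _ => by positivity) (Finset.mem_range.mpr (Nat.lt_succ_self n))
        _ ≤ Real.exp (Real.exp 1 * R) := Real.sum_le_exp_of_nonneg (by positivity) _
    have h2 : R ^ n / (Nat.factorial n : ℝ)
        = (Real.exp 1 * R) ^ n / (Nat.factorial n : ℝ) * Real.exp (-(n : ℝ)) := by
      have hexp : Real.exp ((n : ℕ) : ℝ) = Real.exp 1 ^ n := by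
        rw [← Real.exp_nat_mul]; norm_num
      rw [mul_pow, Real.exp_neg]
      field_simp
      rw [hexp]
      ring
    rw [h2]
    calc (Real.exp 1 * R) ^ n / (Nat.factorial n : ℝ) * Real.exp (-(n : ℝ))
        ≤ Real.exp (Real.exp 1 * R) * Real.exp (-(n : ℝ)) := by
          gcongr
      _ = _ := rfl
  have hnorminv : ‖(((2 * Real.pi) ^ 2 : ℝ) : ℂ)⁻¹‖ = ((2 * Real.pi) ^ 2)⁻¹ := by
    rw [norm_inv, Complex.norm_real, Real.norm_eq_abs, abs_of_pos (by positivity)]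
  calc ‖FT 2 (fun x => (((vnm n m x).re : ℝ) : ℂ)) ξ‖
      = ((2 * Real.pi) ^ 2)⁻¹ * ‖∫ x : Fin 2 → ℝ,
          (Complex.exp (Complex.I * ((ξ 0 * x 0 + ξ 1 * x 1 : ℝ) : ℂ))
            - ∑ k ∈ Finset.range n, (Complex.I * ((ξ 0 * x 0 + ξ 1 * x 1 : ℝ) : ℂ)) ^ k
                / (Nat.factorial k : ℂ)) * (((vnm n m x).re : ℝ) : ℂ)‖ := by
        rw [hFT, hsub, norm_mul, hnorminv]
    _ ≤ ((2 * Real.pi) ^ 2)⁻¹ * (D * V) := by gcongr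
    _ = ((2 * Real.pi) ^ 2)⁻¹ * V * Real.exp R * (R ^ n / (Nat.factorial n : ℝ)) := by
        rw [hD]; ring
    _ ≤ ((2 * Real.pi) ^ 2)⁻¹ * V * Real.exp R
          * (Real.exp (Real.exp 1 * R) * Real.exp (-(n : ℝ))) := by
        gcongr
    _ = ((2 * Real.pi) ^ 2)⁻¹ * V * (Real.exp R * Real.exp (Real.exp 1 * R))
          * Real.exp (-(n : ℝ)) := by ring
    _ ≤ (((2 * Real.pi) ^ 2)⁻¹ * V * (Real.exp R * Real.exp (Real.exp 1 * R)) + 1)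
          * Real.exp (-(n : ℝ)) := by
        have := Real.exp_pos (-(n : ℝ))
        nlinarith
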